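/- Let m, n ≥ 1, let Φ¹ ≤ Γ¹ and Φ² ≤ Γ² be integer m×n prefix-bound matrices, let S_P ⊆ S_{m,n}, and let m_P : S_P → ℤ be a partial prescription of entries. Then there exists an integer prefix-bounded matrix A (with respect to Φ¹, Γ¹, Φ², Γ²) with A(i,j) = m_P(i,j) for every (i,j) ∈ S_P if and only if for all X₁, X₂ ⊆ S_{m,n} with X₁ ⊖ X₂ ⊆ S_P the two inequalities p*₁(X₁) + m̃_P(X₂ − X₁) ≤ b*₂(X₂) + m̃_P(X₁ − X₂) and p*₂(X₂) + m̃_P(X₁ − X₂) ≤ b*₁(X₁) + m̃_P(X₂ − X₁) hold. -/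

import Mathlib

set_option maxHeartbeats 1000000




/-- The set of positions of an m×n matrix, 1-based: S_{m,n} = [m] × [n]. -/
def Smn (m n : ℕ) : Finset (ℕ × ℕ) := Finset.Icc 1 m ×ˢ Finset.Icc 1 n

/-- The horizontal prefix P¹_{i,j} = {(i,1), …, (i,j)}. -/
def hPrefix (i j : ℕ) : Finset (ℕ × ℕ) := {i} ×ˢ Finset.Icc 1 j

/-- The vertical prefix P²_{i,j} = {(1,j), …, (i,j)}. -/
def vPrefix (i j : ℕ) : Finset (ℕ × ℕ) := Finset.Icc 1 i ×ˢ {j}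

/-- x̃(X), the sum of the entries of x at the positions in X. -/
def fsum (x : ℕ × ℕ → ℤ) (X : Finset (ℕ × ℕ)) : ℤ := ∑ s ∈ X, x s

/-- A is a prefix-bounded matrix (PBM) of size m×n with respect to the
horizontal-prefix bounds Φ1 ≤ Γ1 and the vertical-prefix bounds Φ2 ≤ Γ2. -/
def IsPBM (m n : ℕ) (Φ1 Γ1 Φ2 Γ2 : ℕ × ℕ → ℤ) (A : ℕ × ℕ → ℤ) : Prop :=
  ∀ i ∈ Finset.Icc 1 m, ∀ j ∈ Finset.Icc 1 n,
    (Φ1 (i, j) ≤ fsum A (hPrefix i j) ∧ fsum A (hPrefix i j) ≤ Γ1 (i, j)) ∧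
    (Φ2 (i, j) ≤ fsum A (vPrefix i j) ∧ fsum A (vPrefix i j) ≤ Γ2 (i, j))

/-- Starting positions of the maximal horizontal segments of X ⊆ S_{m,n}. -/
def hStarts (X : Finset (ℕ × ℕ)) : Finset (ℕ × ℕ) :=
  X.filter (fun s => (s.1, s.2 - 1) ∉ X)

/-- Ending positions of the maximal horizontal segments of X ⊆ S_{m,n}. -/
def hEnds (X : Finset (ℕ × ℕ)) : Finset (ℕ × ℕ) :=
  X.filter (fun s => (s.1, s.2 + 1) ∉ X)

/-- Starting positions of the maximal vertical segments of X ⊆ S_{m,n}. -/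
def vStarts (X : Finset (ℕ × ℕ)) : Finset (ℕ × ℕ) :=
  X.filter (fun s => (s.1 - 1, s.2) ∉ X)

/-- Ending positions of the maximal vertical segments of X ⊆ S_{m,n}. -/
def vEnds (X : Finset (ℕ × ℕ)) : Finset (ℕ × ℕ) :=
  X.filter (fun s => (s.1 + 1, s.2) ∉ X)

/-- σ₁(X): the number of maximal horizontal segments of X. -/
def sigma1 (X : Finset (ℕ × ℕ)) : ℕ := (hStarts X).card

/-- σ₂(X): the number of maximal vertical segments of X. -/
def sigma2 (X : Finset (ℕ × ℕ)) : ℕ := (vStarts X).card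

/-- p*₁(X) = Σ [Φ¹(i,j₂) − Γ¹(i,j₁−1)] over the maximal horizontal segments
{(i,j₁),…,(i,j₂)} of X, with the convention Γ¹(i,0) = 0. -/
def pstar1 (Φ1 Γ1 : ℕ × ℕ → ℤ) (X : Finset (ℕ × ℕ)) : ℤ :=
  ∑ s ∈ hEnds X, Φ1 s -
    ∑ s ∈ hStarts X, (if s.2 = 1 then 0 else Γ1 (s.1, s.2 - 1))

/-- b*₁(X) = Σ [Γ¹(i,j₂) − Φ¹(i,j₁−1)] over the maximal horizontal segments
{(i,j₁),…,(i,j₂)} of X, with the convention Φ¹(i,0) = 0. -/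
def bstar1 (Φ1 Γ1 : ℕ × ℕ → ℤ) (X : Finset (ℕ × ℕ)) : ℤ :=
  ∑ s ∈ hEnds X, Γ1 s -
    ∑ s ∈ hStarts X, (if s.2 = 1 then 0 else Φ1 (s.1, s.2 - 1))

/-- p*₂(X) = Σ [Φ²(i₂,j) − Γ²(i₁−1,j)] over the maximal vertical segments
{(i₁,j),…,(i₂,j)} of X, with the convention Γ²(0,j) = 0. -/
def pstar2 (Φ2 Γ2 : ℕ × ℕ → ℤ) (X : Finset (ℕ × ℕ)) : ℤ :=
  ∑ s ∈ vEnds X, Φ2 s -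
    ∑ s ∈ vStarts X, (if s.1 = 1 then 0 else Γ2 (s.1 - 1, s.2))

/-- b*₂(X) = Σ [Γ²(i₂,j) − Φ²(i₁−1,j)] over the maximal vertical segments
{(i₁,j),…,(i₂,j)} of X, with the convention Φ²(0,j) = 0. -/
def bstar2 (Φ2 Γ2 : ℕ × ℕ → ℤ) (X : Finset (ℕ × ℕ)) : ℤ :=
  ∑ s ∈ vEnds X, Γ2 s -
    ∑ s ∈ vStarts X, (if s.1 = 1 then 0 else Φ2 (s.1 - 1, s.2))




namespace PBMproof
set_option linter.unusedSectionVars false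

variable {V : Type} [DecidableEq V] {ι : Type} [DecidableEq ι]

def cutIn (E : Finset ι) (tl hd : ι → V) (K : V → Bool) : Finset ι :=
  E.filter (fun e => K (hd e) = true ∧ K (tl e) = false)

def cutOut (E : Finset ι) (tl hd : ι → V) (K : V → Bool) : Finset ι :=
  E.filter (fun e => K (tl e) = true ∧ K (hd e) = false)

def cutVal (E : Finset ι) (tl hd : ι → V) (lo hi : ι → ℤ) (K : V → Bool) : ℤ :=
  ∑ e ∈ cutIn E tl hd K, lo e - ∑ e ∈ cutOut E tl hd K, hi e

def CutCond (E : Finset ι) (tl hd : ι → V) (lo hi : ι → ℤ) : Prop :=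
  ∀ K : V → Bool, cutVal E tl hd lo hi K ≤ 0

def IsCirc (E : Finset ι) (tl hd : ι → V) (lo hi : ι → ℤ) (f : ι → ℤ) : Prop :=
  (∀ e ∈ E, lo e ≤ f e ∧ f e ≤ hi e) ∧
  ∀ v : V, ∑ e ∈ E.filter (fun e => hd e = v), f e = ∑ e ∈ E.filter (fun e => tl e = v), f e

lemma cutVal_eq_sum (E : Finset ι) (tl hd : ι → V) (lo hi : ι → ℤ) (K : V → Bool) :
    cutVal E tl hd lo hi K = ∑ e ∈ E,
      ((if K (hd e) = true ∧ K (tl e) = false then lo e else 0)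
        - (if K (tl e) = true ∧ K (hd e) = false then hi e else 0)) := by
  rw [cutVal, cutIn, cutOut, Finset.sum_filter, Finset.sum_filter, Finset.sum_sub_distrib]

lemma per_arc (a1 a2 b1 b2 : Bool) (l h : ℤ) :
    ((if b1 = true ∧ a1 = false then l else 0) - (if a1 = true ∧ b1 = false then h else 0))
    + ((if b2 = true ∧ a2 = false then l else 0) - (if a2 = true ∧ b2 = false then h else 0))
    = ((if (b1 || b2) = true ∧ (a1 || a2) = false then l else 0)
        - (if (a1 || a2) = true ∧ (b1 || b2) = false then h else 0))
    + ((if (b1 && b2) = true ∧ (a1 && a2) = false then l else 0)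
        - (if (a1 && a2) = true ∧ (b1 && b2) = false then h else 0))
    + (if (a1 = true ∧ a2 = false ∧ b2 = true ∧ b1 = false)
          ∨ (a2 = true ∧ a1 = false ∧ b1 = true ∧ b2 = false) then l - h else 0) := by
  cases a1 <;> cases a2 <;> cases b1 <;> cases b2 <;> simp <;> ring

lemma uncross (E : Finset ι) (tl hd : ι → V) (lo hi : ι → ℤ) (K1 K2 : V → Bool) :
    cutVal E tl hd lo hi K1 + cutVal E tl hd lo hi K2 =
      cutVal E tl hd lo hi (fun v => K1 v || K2 v)
      + cutVal E tl hd lo hi (fun v => K1 v && K2 v)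
      + ∑ e ∈ E, (if (K1 (tl e) = true ∧ K2 (tl e) = false ∧ K2 (hd e) = true ∧ K1 (hd e) = false)
          ∨ (K2 (tl e) = true ∧ K1 (tl e) = false ∧ K1 (hd e) = true ∧ K2 (hd e) = false)
          then lo e - hi e else 0) := by
  simp only [cutVal_eq_sum, ← Finset.sum_add_distrib]
  apply Finset.sum_congr rfl
  intro e _
  exact per_arc (K1 (tl e)) (K2 (tl e)) (K1 (hd e)) (K2 (hd e)) (lo e) (hi e)

/-- if all bounds are tight, lo is a circulation under the cut condition -/
lemma tight_case (E : Finset ι) (tl hd : ι → V) (lo hi : ι → ℤ)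
    (htight : ∀ e ∈ E, lo e = hi e)
    (hcut : CutCond E tl hd lo hi) : IsCirc E tl hd lo hi lo := by
  constructor
  · exact fun e he => ⟨le_refl _, le_of_eq (htight e he)⟩
  · intro v
    have key : ∀ K : V → Bool,
        ∑ e ∈ cutIn E tl hd K, lo e ≤ ∑ e ∈ cutOut E tl hd K, lo e := by
      intro K
      have := hcut K
      rw [cutVal] at this
      have : ∑ e ∈ cutIn E tl hd K, lo e ≤ ∑ e ∈ cutOut E tl hd K, hi e := by linarith
      calc ∑ e ∈ cutIn E tl hd K, lo e ≤ ∑ e ∈ cutOut E tl hd K, hi e := this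
        _ = ∑ e ∈ cutOut E tl hd K, lo e := by
            apply Finset.sum_congr rfl
            intro e he
            exact (htight e (Finset.mem_of_mem_filter e he)).symm
    -- cut at {v} and at complement of {v}
    have h1 := key (fun w => w = v)
    have h2 := key (fun w => ¬ (w = v))
    -- rewrite cutIn/cutOut as filters on equalities
    have e1 : cutIn E tl hd (fun w => w = v) = E.filter (fun e => hd e = v ∧ ¬ tl e = v) := by
      apply Finset.filter_congr; intro e _; simp
    have e2 : cutOut E tl hd (fun w => w = v) = E.filter (fun e => tl e = v ∧ ¬ hd e = v) := by
      apply Finset.filter_congr; intro e _; simp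
    have e3 : cutIn E tl hd (fun w => ¬ (w = v)) = E.filter (fun e => tl e = v ∧ ¬ hd e = v) := by
      apply Finset.filter_congr; intro e _; simp [and_comm]
    have e4 : cutOut E tl hd (fun w => ¬ (w = v)) = E.filter (fun e => hd e = v ∧ ¬ tl e = v) := by
      apply Finset.filter_congr; intro e _; simp [and_comm]
    rw [e1, e2] at h1
    rw [e3, e4] at h2
    have hsplit : ∀ g : ι → ℤ,
        ∑ e ∈ E.filter (fun e => hd e = v), g e
          = ∑ e ∈ E.filter (fun e => hd e = v ∧ ¬ tl e = v), g e
            + ∑ e ∈ E.filter (fun e => hd e = v ∧ tl e = v), g e := by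
      intro g
      rw [← Finset.sum_filter_add_sum_filter_not (E.filter (fun e => hd e = v)) (fun e => ¬ tl e = v)]
      congr 1
      · rw [Finset.filter_filter]
      · rw [Finset.filter_filter]; simp
    have hsplit2 : ∀ g : ι → ℤ,
        ∑ e ∈ E.filter (fun e => tl e = v), g e
          = ∑ e ∈ E.filter (fun e => tl e = v ∧ ¬ hd e = v), g e
            + ∑ e ∈ E.filter (fun e => hd e = v ∧ tl e = v), g e := by
      intro g
      rw [← Finset.sum_filter_add_sum_filter_not (E.filter (fun e => tl e = v)) (fun e => ¬ hd e = v)]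
      congr 1
      · rw [Finset.filter_filter]
      · rw [Finset.filter_filter]
        apply Finset.sum_congr _ (fun _ _ => rfl)
        apply Finset.filter_congr; intro e _; simp [and_comm]
    rw [hsplit lo, hsplit2 lo]
    omega

theorem hoffman_aux (N : ℕ) : ∀ (E : Finset ι) (tl hd : ι → V) (lo hi : ι → ℤ),
    (∑ e ∈ E, (hi e - lo e).toNat = N) →
    (∀ e ∈ E, lo e ≤ hi e) →
    CutCond E tl hd lo hi →
    ∃ f : ι → ℤ, IsCirc E tl hd lo hi f := by
  induction N using Nat.strong_induction_on with
  | _ N IH =>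
    intro E tl hd lo hi hN hlh hcut
    by_cases htight : ∀ e ∈ E, lo e = hi e
    · exact ⟨lo, tight_case E tl hd lo hi htight hcut⟩
    · push_neg at htight
      obtain ⟨e0, he0, hne⟩ := htight
      have hlt : lo e0 < hi e0 := lt_of_le_of_ne (hlh e0 he0) hne
      -- try decreasing hi at e0
      set hi' : ι → ℤ := Function.update hi e0 (hi e0 - 1) with hhi'
      set lo' : ι → ℤ := Function.update lo e0 (lo e0 + 1) with hlo'
      have hi'le : ∀ e, hi' e ≤ hi e := by
        intro e; by_cases h : e = e0 <;> simp [hhi', h, Function.update] <;> omega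
      have lo'ge : ∀ e, lo e ≤ lo' e := by
        intro e; by_cases h : e = e0 <;> simp [hlo', h, Function.update] <;> omega

      have decr1 : ∑ e ∈ E, (hi' e - lo e).toNat < N := by
        rw [← hN]
        apply Finset.sum_lt_sum
        · intro e he
          have := hi'le e; omega
        · refine ⟨e0, he0, ?_⟩
          have : hi' e0 = hi e0 - 1 := by simp [hhi']
          omega
      have decr2 : ∑ e ∈ E, (hi e - lo' e).toNat < N := by
        rw [← hN]
        apply Finset.sum_lt_sum
        · intro e he
          have := lo'ge e; omega
        · refine ⟨e0, he0, ?_⟩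
          have : lo' e0 = lo e0 + 1 := by simp [hlo']
          omega
      have hlh1 : ∀ e ∈ E, lo e ≤ hi' e := by
        intro e he
        by_cases h : e = e0
        · subst h; have : hi' e = hi e - 1 := by simp [hhi']
          omega
        · have : hi' e = hi e := by simp [hhi', h]
          exact this ▸ hlh e he
      have hlh2 : ∀ e ∈ E, lo' e ≤ hi e := by
        intro e he
        by_cases h : e = e0
        · subst h; have : lo' e = lo e + 1 := by simp [hlo']
          omega
        · have : lo' e = lo e := by simp [hlo', h]
          exact this ▸ hlh e he

      by_cases hc1 : CutCond E tl hd lo hi'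
      · obtain ⟨f, hb, hcons⟩ := IH _ decr1 E tl hd lo hi' rfl hlh1 hc1
        exact ⟨f, fun e he => ⟨(hb e he).1, le_trans (hb e he).2 (hi'le e)⟩, hcons⟩
      by_cases hc2 : CutCond E tl hd lo' hi
      · obtain ⟨f, hb, hcons⟩ := IH _ decr2 E tl hd lo' hi rfl hlh2 hc2
        exact ⟨f, fun e he => ⟨le_trans (lo'ge e) (hb e he).1, (hb e he).2⟩, hcons⟩
      exfalso
      -- get violating cuts
      rw [CutCond, not_forall] at hc1 hc2
      obtain ⟨K1, hK1⟩ := hc1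
      obtain ⟨K2, hK2⟩ := hc2
      push_neg at hK1 hK2
      -- K1: cutVal with (lo, hi') > 0.  Deduce e0 ∈ cutOut K1 and cutVal lo hi K1 = 0
      have hK1out : e0 ∈ cutOut E tl hd K1 := by
        by_contra hmem
        have : cutVal E tl hd lo hi' K1 = cutVal E tl hd lo hi K1 := by
          rw [cutVal, cutVal]
          congr 1
          apply Finset.sum_congr rfl
          intro e he
          have : e ≠ e0 := fun h => hmem (h ▸ he)
          simp [hhi', Function.update, this]
        rw [this] at hK1
        exact absurd (hcut K1) (not_le.mpr hK1)
      have hK1val : cutVal E tl hd lo hi K1 = 0 := by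
        have hle := hcut K1
        have : cutVal E tl hd lo hi' K1 = cutVal E tl hd lo hi K1 + 1 := by
          rw [cutVal, cutVal]
          have : ∑ e ∈ cutOut E tl hd K1, hi' e = (∑ e ∈ cutOut E tl hd K1, hi e) - 1 := by
            rw [← Finset.sum_erase_add _ _ hK1out, ← Finset.sum_erase_add _ hi hK1out]
            have h1 : hi' e0 = hi e0 - 1 := by simp [hhi']
            have h2 : ∀ e ∈ (cutOut E tl hd K1).erase e0, hi' e = hi e := by
              intro e he
              have := Finset.ne_of_mem_erase he
              simp [hhi', Function.update, this]
            rw [Finset.sum_congr rfl h2, h1]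
            ring
          rw [this]; ring
        omega
      have hK2in : e0 ∈ cutIn E tl hd K2 := by
        by_contra hmem
        have : cutVal E tl hd lo' hi K2 = cutVal E tl hd lo hi K2 := by
          rw [cutVal, cutVal]
          congr 1
          apply Finset.sum_congr rfl
          intro e he
          have : e ≠ e0 := fun h => hmem (h ▸ he)
          simp [hlo', Function.update, this]
        rw [this] at hK2
        exact absurd (hcut K2) (not_le.mpr hK2)
      have hK2val : cutVal E tl hd lo hi K2 = 0 := by
        have hle := hcut K2
        have : cutVal E tl hd lo' hi K2 = cutVal E tl hd lo hi K2 + 1 := by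
          rw [cutVal, cutVal]
          have : ∑ e ∈ cutIn E tl hd K2, lo' e = (∑ e ∈ cutIn E tl hd K2, lo e) + 1 := by
            rw [← Finset.sum_erase_add _ _ hK2in, ← Finset.sum_erase_add _ lo hK2in]
            have h1 : lo' e0 = lo e0 + 1 := by simp [hlo']
            have h2 : ∀ e ∈ (cutIn E tl hd K2).erase e0, lo' e = lo e := by
              intro e he
              have := Finset.ne_of_mem_erase he
              simp [hlo', Function.update, this]
            rw [Finset.sum_congr rfl h2, h1]
            ring
          rw [this]; ring
        omega
      -- uncrossing contradiction
      have hu := uncross E tl hd lo hi K1 K2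
      rw [hK1val, hK2val] at hu
      have hcross : ∑ e ∈ E, (if (K1 (tl e) = true ∧ K2 (tl e) = false ∧ K2 (hd e) = true ∧ K1 (hd e) = false)
          ∨ (K2 (tl e) = true ∧ K1 (tl e) = false ∧ K1 (hd e) = true ∧ K2 (hd e) = false)
          then lo e - hi e else 0) ≤ lo e0 - hi e0 := by
        have he0cross : ((K1 (tl e0) = true ∧ K2 (tl e0) = false ∧ K2 (hd e0) = true ∧ K1 (hd e0) = false)
          ∨ (K2 (tl e0) = true ∧ K1 (tl e0) = false ∧ K1 (hd e0) = true ∧ K2 (hd e0) = false)) := by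
          left
          rw [cutOut, Finset.mem_filter] at hK1out
          rw [cutIn, Finset.mem_filter] at hK2in
          exact ⟨hK1out.2.1, hK2in.2.2, hK2in.2.1, hK1out.2.2⟩
        rw [← Finset.add_sum_erase _ _ he0, if_pos he0cross]
        have : ∑ e ∈ E.erase e0, (if (K1 (tl e) = true ∧ K2 (tl e) = false ∧ K2 (hd e) = true ∧ K1 (hd e) = false)
          ∨ (K2 (tl e) = true ∧ K1 (tl e) = false ∧ K1 (hd e) = true ∧ K2 (hd e) = false)
          then lo e - hi e else 0) ≤ 0 := by
          apply Finset.sum_nonpos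
          intro e he
          split
          · exact sub_nonpos.mpr (hlh e (Finset.mem_of_mem_erase he))
          · exact le_refl 0
        omega
      have h3 := hcut (fun v => K1 v || K2 v)
      have h4 := hcut (fun v => K1 v && K2 v)
      omega

theorem hoffman (E : Finset ι) (tl hd : ι → V) (lo hi : ι → ℤ)
    (hlh : ∀ e ∈ E, lo e ≤ hi e) (hcut : CutCond E tl hd lo hi) :
    ∃ f : ι → ℤ, IsCirc E tl hd lo hi f :=
  hoffman_aux _ E tl hd lo hi rfl hlh hcut

end PBMproof

namespace PBMproof

inductive Nd where
  | w (i q : ℕ)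
  | u (p j : ℕ)
  | z
  deriving DecidableEq

inductive Arc where
  | ar (i j : ℕ)
  | ac (i j : ℕ)
  | ce (i j : ℕ)
  deriving DecidableEq

/-- all arcs: one of each kind per cell of the matrix -/
def arcSet (m n : ℕ) : Finset Arc :=
  ((Smn m n).image (fun p => Arc.ar p.1 p.2) ∪ (Smn m n).image (fun p => Arc.ac p.1 p.2))
    ∪ (Smn m n).image (fun p => Arc.ce p.1 p.2)

@[simp] lemma ar_mem_arcSet (m n i j : ℕ) :
    Arc.ar i j ∈ arcSet m n ↔ (i, j) ∈ Smn m n := by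
  simp [arcSet]
@[simp] lemma ac_mem_arcSet (m n i j : ℕ) :
    Arc.ac i j ∈ arcSet m n ↔ (i, j) ∈ Smn m n := by
  simp [arcSet]
@[simp] lemma ce_mem_arcSet (m n i j : ℕ) :
    Arc.ce i j ∈ arcSet m n ↔ (i, j) ∈ Smn m n := by
  simp [arcSet]

def tl (m : ℕ) : Arc → Nd
  | .ar i j => .w i (j - 1)
  | .ac i j => if i = m then .z else .u i j
  | .ce i j => .u (i - 1) j

def hd (n : ℕ) : Arc → Nd
  | .ar i j => if j = n then .z else .w i j
  | .ac i j => .u (i - 1) j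
  | .ce i j => .w i (j - 1)

def Mbig (m n : ℕ) (Φ1 Γ1 Φ2 Γ2 mP : ℕ × ℕ → ℤ) : ℤ :=
  1 + ∑ p ∈ Smn m n, (|Φ1 p| + |Γ1 p| + |Φ2 p| + |Γ2 p| + |mP p|)

def lo (m n : ℕ) (Φ1 Γ1 Φ2 Γ2 : ℕ × ℕ → ℤ) (SP : Finset (ℕ × ℕ)) (mP : ℕ × ℕ → ℤ) : Arc → ℤ
  | .ar i j => Φ1 (i, j)
  | .ac i j => Φ2 (i, j)
  | .ce i j => if (i, j) ∈ SP then mP (i, j) else -(Mbig m n Φ1 Γ1 Φ2 Γ2 mP)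

def hi (m n : ℕ) (Φ1 Γ1 Φ2 Γ2 : ℕ × ℕ → ℤ) (SP : Finset (ℕ × ℕ)) (mP : ℕ × ℕ → ℤ) : Arc → ℤ
  | .ar i j => Γ1 (i, j)
  | .ac i j => Γ2 (i, j)
  | .ce i j => if (i, j) ∈ SP then mP (i, j) else Mbig m n Φ1 Γ1 Φ2 Γ2 mP

lemma Mbig_pos (m n : ℕ) (Φ1 Γ1 Φ2 Γ2 mP : ℕ × ℕ → ℤ) : 0 < Mbig m n Φ1 Γ1 Φ2 Γ2 mP := by
  have : (0:ℤ) ≤ ∑ p ∈ Smn m n, (|Φ1 p| + |Γ1 p| + |Φ2 p| + |Γ2 p| + |mP p|) :=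
    Finset.sum_nonneg (fun p _ => by positivity)
  rw [Mbig]; omega

lemma lo_le_hi (m n : ℕ) (Φ1 Γ1 Φ2 Γ2 : ℕ × ℕ → ℤ) (SP : Finset (ℕ × ℕ)) (mP : ℕ × ℕ → ℤ)
    (hΦΓ1 : ∀ s ∈ Smn m n, Φ1 s ≤ Γ1 s) (hΦΓ2 : ∀ s ∈ Smn m n, Φ2 s ≤ Γ2 s) :
    ∀ e ∈ arcSet m n, lo m n Φ1 Γ1 Φ2 Γ2 SP mP e ≤ hi m n Φ1 Γ1 Φ2 Γ2 SP mP e := by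
  intro e he
  have hM := Mbig_pos m n Φ1 Γ1 Φ2 Γ2 mP
  cases e with
  | ar i j => exact hΦΓ1 _ ((ar_mem_arcSet m n i j).mp he)
  | ac i j => exact hΦΓ2 _ ((ac_mem_arcSet m n i j).mp he)
  | ce i j =>
    simp only [lo, hi]
    split
    · exact le_refl _
    · omega

end PBMproof

namespace PBMproof

@[simp] lemma mem_Smn (m n i j : ℕ) :
    (i, j) ∈ Smn m n ↔ 1 ≤ i ∧ i ≤ m ∧ 1 ≤ j ∧ j ≤ n := by
  simp [Smn, Finset.mem_product, Finset.mem_Icc, and_assoc]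

lemma fsum_hPrefix (A : ℕ × ℕ → ℤ) (i j : ℕ) :
    fsum A (hPrefix i j) = ∑ q ∈ Finset.Icc 1 j, A (i, q) := by
  rw [hPrefix, fsum, Finset.singleton_product, Finset.sum_map]
  rfl

lemma fsum_vPrefix (A : ℕ × ℕ → ℤ) (i j : ℕ) :
    fsum A (vPrefix i j) = ∑ r ∈ Finset.Icc 1 i, A (r, j) := by
  rw [vPrefix, fsum, Finset.product_singleton, Finset.sum_map]
  rfl

section Fibers

variable (m n : ℕ)

lemma fiber_hd_w0 (i : ℕ) (hi1 : 1 ≤ i) (him : i ≤ m) (hn : 1 ≤ n) :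
    (arcSet m n).filter (fun e => hd n e = Nd.w i 0) = {Arc.ce i 1} := by
  ext a
  cases a with
  | ar i' j' =>
    rw [Finset.mem_filter]; simp only [Finset.mem_filter, ar_mem_arcSet, mem_Smn, hd, Finset.mem_singleton]
    constructor
    · rintro ⟨⟨h1, h2, h3, h4⟩, h5⟩
      split at h5
      · exact absurd h5 (by simp)
      · simp only [Nd.w.injEq] at h5
        omega
    · rintro ⟨⟩
  | ac i' j' =>
    rw [Finset.mem_filter]; simp only [Finset.mem_filter, ac_mem_arcSet, mem_Smn, hd, Finset.mem_singleton]
    constructor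
    · rintro ⟨_, h5⟩; exact absurd h5 (by simp)
    · rintro ⟨⟩
  | ce i' j' =>
    rw [Finset.mem_filter]; simp only [Finset.mem_filter, ce_mem_arcSet, mem_Smn, hd, Finset.mem_singleton,
      Nd.w.injEq, Arc.ce.injEq]
    constructor
    · rintro ⟨⟨h1, h2, h3, h4⟩, h5, h6⟩
      omega
    · rintro ⟨rfl, rfl⟩
      omega

lemma fiber_hd_w (i q : ℕ) (hi1 : 1 ≤ i) (him : i ≤ m) (hq1 : 1 ≤ q) (hq : q + 1 ≤ n) :
    (arcSet m n).filter (fun e => hd n e = Nd.w i q) = {Arc.ar i q, Arc.ce i (q + 1)} := by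
  ext a
  cases a with
  | ar i' j' =>
    rw [Finset.mem_filter]; simp only [Finset.mem_filter, ar_mem_arcSet, mem_Smn, hd, Finset.mem_insert,
      Finset.mem_singleton, Arc.ar.injEq]
    constructor
    · rintro ⟨⟨h1, h2, h3, h4⟩, h5⟩
      split at h5
      · exact absurd h5 (by simp)
      · simp only [Nd.w.injEq] at h5
        left; exact ⟨h5.1, h5.2⟩
    · rintro (⟨h5, h6⟩ | h5)
      · rw [h5, h6]
        have : ¬ (q = n) := by omega
        simp [this]
        omega
      · exact absurd h5 (by simp)
  | ac i' j' =>
    rw [Finset.mem_filter]; simp only [Finset.mem_filter, ac_mem_arcSet, mem_Smn, hd, Finset.mem_insert,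
      Finset.mem_singleton]
    constructor
    · rintro ⟨_, h5⟩; exact absurd h5 (by simp)
    · rintro (⟨⟨⟩⟩ | ⟨⟨⟩⟩)
  | ce i' j' =>
    rw [Finset.mem_filter]; simp only [Finset.mem_filter, ce_mem_arcSet, mem_Smn, hd, Finset.mem_insert,
      Finset.mem_singleton, Nd.w.injEq, Arc.ce.injEq]
    constructor
    · rintro ⟨⟨h1, h2, h3, h4⟩, h5, h6⟩
      right; omega
    · rintro (⟨⟨⟩⟩ | ⟨rfl, rfl⟩)
      omega

lemma fiber_tl_w (i q : ℕ) (hi1 : 1 ≤ i) (him : i ≤ m) (hq : q + 1 ≤ n) :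
    (arcSet m n).filter (fun e => tl m e = Nd.w i q) = {Arc.ar i (q + 1)} := by
  ext a
  cases a with
  | ar i' j' =>
    rw [Finset.mem_filter]; simp only [Finset.mem_filter, ar_mem_arcSet, mem_Smn, tl, Finset.mem_singleton,
      Nd.w.injEq, Arc.ar.injEq]
    constructor
    · rintro ⟨⟨h1, h2, h3, h4⟩, h5, h6⟩
      omega
    · rintro ⟨rfl, rfl⟩
      omega
  | ac i' j' =>
    rw [Finset.mem_filter]; simp only [Finset.mem_filter, ac_mem_arcSet, mem_Smn, tl, Finset.mem_singleton]
    constructor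
    · rintro ⟨_, h5⟩
      split at h5 <;> exact absurd h5 (by simp)
    · rintro ⟨⟩
  | ce i' j' =>
    rw [Finset.mem_filter]; simp only [Finset.mem_filter, ce_mem_arcSet, mem_Smn, tl, Finset.mem_singleton]
    constructor
    · rintro ⟨_, h5⟩; exact absurd h5 (by simp)
    · rintro ⟨⟩

lemma fiber_hd_u (p j : ℕ) (hp : p + 1 ≤ m) (hj1 : 1 ≤ j) (hjn : j ≤ n) :
    (arcSet m n).filter (fun e => hd n e = Nd.u p j) = {Arc.ac (p + 1) j} := by
  ext a
  cases a with
  | ar i' j' =>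
    rw [Finset.mem_filter]; simp only [Finset.mem_filter, ar_mem_arcSet, mem_Smn, hd, Finset.mem_singleton]
    constructor
    · rintro ⟨_, h5⟩
      split at h5 <;> exact absurd h5 (by simp)
    · rintro ⟨⟩
  | ac i' j' =>
    rw [Finset.mem_filter]; simp only [Finset.mem_filter, ac_mem_arcSet, mem_Smn, hd, Finset.mem_singleton,
      Nd.u.injEq, Arc.ac.injEq]
    constructor
    · rintro ⟨⟨h1, h2, h3, h4⟩, h5, h6⟩
      omega
    · rintro ⟨rfl, rfl⟩
      omega
  | ce i' j' =>
    rw [Finset.mem_filter]; simp only [Finset.mem_filter, ce_mem_arcSet, mem_Smn, hd, Finset.mem_singleton]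
    constructor
    · rintro ⟨_, h5⟩; exact absurd h5 (by simp)
    · rintro ⟨⟩

lemma fiber_tl_u0 (j : ℕ) (hj1 : 1 ≤ j) (hjn : j ≤ n) (hm : 1 ≤ m) :
    (arcSet m n).filter (fun e => tl m e = Nd.u 0 j) = {Arc.ce 1 j} := by
  ext a
  cases a with
  | ar i' j' =>
    rw [Finset.mem_filter]; simp only [Finset.mem_filter, ar_mem_arcSet, mem_Smn, tl, Finset.mem_singleton]
    constructor
    · rintro ⟨_, h5⟩; exact absurd h5 (by simp)
    · rintro ⟨⟩
  | ac i' j' =>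
    rw [Finset.mem_filter]; simp only [Finset.mem_filter, ac_mem_arcSet, mem_Smn, tl, Finset.mem_singleton]
    constructor
    · rintro ⟨⟨h1, h2, h3, h4⟩, h5⟩
      split at h5
      · exact absurd h5 (by simp)
      · simp only [Nd.u.injEq] at h5
        omega
    · rintro ⟨⟩
  | ce i' j' =>
    rw [Finset.mem_filter]; simp only [Finset.mem_filter, ce_mem_arcSet, mem_Smn, tl, Finset.mem_singleton,
      Nd.u.injEq, Arc.ce.injEq]
    constructor
    · rintro ⟨⟨h1, h2, h3, h4⟩, h5, h6⟩
      omega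
    · rintro ⟨rfl, rfl⟩
      omega

lemma fiber_tl_u (p j : ℕ) (hp1 : 1 ≤ p) (hp : p + 1 ≤ m) (hj1 : 1 ≤ j) (hjn : j ≤ n) :
    (arcSet m n).filter (fun e => tl m e = Nd.u p j) = {Arc.ac p j, Arc.ce (p + 1) j} := by
  ext a
  cases a with
  | ar i' j' =>
    rw [Finset.mem_filter]; simp only [Finset.mem_filter, ar_mem_arcSet, mem_Smn, tl, Finset.mem_insert,
      Finset.mem_singleton]
    constructor
    · rintro ⟨_, h5⟩; exact absurd h5 (by simp)
    · rintro (⟨⟨⟩⟩ | ⟨⟨⟩⟩)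
  | ac i' j' =>
    rw [Finset.mem_filter]; simp only [Finset.mem_filter, ac_mem_arcSet, mem_Smn, tl, Finset.mem_insert,
      Finset.mem_singleton, Arc.ac.injEq]
    constructor
    · rintro ⟨⟨h1, h2, h3, h4⟩, h5⟩
      split at h5
      · exact absurd h5 (by simp)
      · simp only [Nd.u.injEq] at h5
        left; exact ⟨h5.1, h5.2⟩
    · rintro (⟨h5, h6⟩ | h5)
      · rw [h5, h6]
        have : ¬ (p = m) := by omega
        simp [this]
        omega
      · exact absurd h5 (by simp)
  | ce i' j' =>
    rw [Finset.mem_filter]; simp only [Finset.mem_filter, ce_mem_arcSet, mem_Smn, tl, Finset.mem_insert,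
      Finset.mem_singleton, Nd.u.injEq, Arc.ce.injEq]
    constructor
    · rintro ⟨⟨h1, h2, h3, h4⟩, h5, h6⟩
      right; omega
    · rintro (⟨⟨⟩⟩ | ⟨rfl, rfl⟩)
      omega

end Fibers

end PBMproof

namespace PBMproof

section CircToPBM

variable (m n : ℕ) (Φ1 Γ1 Φ2 Γ2 : ℕ × ℕ → ℤ) (SP : Finset (ℕ × ℕ)) (mP : ℕ × ℕ → ℤ)
variable (f : Arc → ℤ)

lemma row_prefix
    (hf : IsCirc (arcSet m n) (tl m) (hd n) (lo m n Φ1 Γ1 Φ2 Γ2 SP mP)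
      (hi m n Φ1 Γ1 Φ2 Γ2 SP mP) f) :
    ∀ j, 1 ≤ j → j ≤ n → ∀ i, 1 ≤ i → i ≤ m →
      f (Arc.ar i j) = ∑ q ∈ Finset.Icc 1 j, f (Arc.ce i q) := by
  intro j hj1
  induction j, hj1 using Nat.le_induction with
  | base =>
    intro h1n i hi1 him
    have cons := hf.2 (Nd.w i 0)
    rw [fiber_hd_w0 m n i hi1 him h1n, fiber_tl_w m n i 0 hi1 him (by omega)] at cons
    simp only [Finset.sum_singleton] at cons
    simp [← cons]
  | succ j hj IH =>
    intro hjn i hi1 him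
    have cons := hf.2 (Nd.w i j)
    rw [fiber_hd_w m n i j hi1 him hj hjn,
      fiber_tl_w m n i j hi1 him hjn] at cons
    rw [Finset.sum_insert (by simp), Finset.sum_singleton, Finset.sum_singleton] at cons
    rw [← cons, IH (by omega) i hi1 him, Finset.sum_Icc_succ_top (by omega)]

lemma col_prefix
    (hf : IsCirc (arcSet m n) (tl m) (hd n) (lo m n Φ1 Γ1 Φ2 Γ2 SP mP)
      (hi m n Φ1 Γ1 Φ2 Γ2 SP mP) f) :
    ∀ i, 1 ≤ i → i ≤ m → ∀ j, 1 ≤ j → j ≤ n →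
      f (Arc.ac i j) = ∑ r ∈ Finset.Icc 1 i, f (Arc.ce r j) := by
  intro i hi1
  induction i, hi1 using Nat.le_induction with
  | base =>
    intro h1m j hj1 hjn
    have cons := hf.2 (Nd.u 0 j)
    rw [fiber_hd_u m n 0 j (by omega) hj1 hjn, fiber_tl_u0 m n j hj1 hjn h1m] at cons
    simp only [Finset.sum_singleton] at cons
    simp [cons]
  | succ i hi2 IH =>
    intro him j hj1 hjn
    have cons := hf.2 (Nd.u i j)
    rw [fiber_hd_u m n i j him hj1 hjn,
      fiber_tl_u m n i j hi2 him hj1 hjn] at cons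
    rw [Finset.sum_insert (by simp), Finset.sum_singleton, Finset.sum_singleton] at cons
    rw [cons, IH (by omega) j hj1 hjn, Finset.sum_Icc_succ_top (by omega)]

theorem circ_to_pbm (hSP : SP ⊆ Smn m n)
    (hf : IsCirc (arcSet m n) (tl m) (hd n) (lo m n Φ1 Γ1 Φ2 Γ2 SP mP)
      (hi m n Φ1 Γ1 Φ2 Γ2 SP mP) f) :
    ∃ A : ℕ × ℕ → ℤ, IsPBM m n Φ1 Γ1 Φ2 Γ2 A ∧ ∀ s ∈ SP, A s = mP s := by
  refine ⟨fun p => f (Arc.ce p.1 p.2), ?_, ?_⟩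
  · intro i hi' j hj'
    rw [Finset.mem_Icc] at hi' hj'
    have hrow : fsum (fun p => f (Arc.ce p.1 p.2)) (hPrefix i j) = f (Arc.ar i j) := by
      rw [fsum_hPrefix, row_prefix m n Φ1 Γ1 Φ2 Γ2 SP mP f hf j hj'.1 hj'.2 i hi'.1 hi'.2]
    have hcol : fsum (fun p => f (Arc.ce p.1 p.2)) (vPrefix i j) = f (Arc.ac i j) := by
      rw [fsum_vPrefix, col_prefix m n Φ1 Γ1 Φ2 Γ2 SP mP f hf i hi'.1 hi'.2 j hj'.1 hj'.2]
    have hbar := hf.1 (Arc.ar i j) (by simp; omega)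
    have hbac := hf.1 (Arc.ac i j) (by simp; omega)
    rw [hrow, hcol]
    exact ⟨⟨hbar.1, hbar.2⟩, ⟨hbac.1, hbac.2⟩⟩
  · intro s hs
    have hmem : Arc.ce s.1 s.2 ∈ arcSet m n := by
      have := hSP hs
      simp only [ce_mem_arcSet]
      rwa [Prod.mk.eta]
    have hb := hf.1 (Arc.ce s.1 s.2) hmem
    have h1 : lo m n Φ1 Γ1 Φ2 Γ2 SP mP (Arc.ce s.1 s.2) = mP s := by
      simp only [lo, Prod.mk.eta, if_pos hs]
    have h2 : hi m n Φ1 Γ1 Φ2 Γ2 SP mP (Arc.ce s.1 s.2) = mP s := by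
      simp only [hi, Prod.mk.eta, if_pos hs]
    show f (Arc.ce s.1 s.2) = mP s
    rw [h1] at hb
    rw [h2] at hb
    omega

end CircToPBM

end PBMproof

namespace PBMproof

lemma sum_arcSet_split (m n : ℕ) (g : Arc → ℤ) (P : Arc → Prop) [DecidablePred P] :
    ∑ e ∈ (arcSet m n).filter P, g e
      = ∑ p ∈ (Smn m n).filter (fun p => P (Arc.ar p.1 p.2)), g (Arc.ar p.1 p.2)
      + ∑ p ∈ (Smn m n).filter (fun p => P (Arc.ac p.1 p.2)), g (Arc.ac p.1 p.2)
      + ∑ p ∈ (Smn m n).filter (fun p => P (Arc.ce p.1 p.2)), g (Arc.ce p.1 p.2) := by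
  rw [arcSet, Finset.filter_union, Finset.filter_union, Finset.sum_union, Finset.sum_union]
  · congr 1
    · congr 1
      · rw [Finset.filter_image, Finset.sum_image]
        intro x _ y _ hxy
        simp only [Arc.ar.injEq] at hxy
        exact Prod.ext hxy.1 hxy.2
      · rw [Finset.filter_image, Finset.sum_image]
        intro x _ y _ hxy
        simp only [Arc.ac.injEq] at hxy
        exact Prod.ext hxy.1 hxy.2
    · rw [Finset.filter_image, Finset.sum_image]
      intro x _ y _ hxy
      simp only [Arc.ce.injEq] at hxy
      exact Prod.ext hxy.1 hxy.2
  · rw [Finset.disjoint_left]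
    intro a ha hb
    simp only [Finset.mem_filter, Finset.mem_image] at ha hb
    obtain ⟨⟨x, _, rfl⟩, _⟩ := ha
    obtain ⟨⟨y, _, h⟩, _⟩ := hb
    exact absurd h (by simp)
  · rw [Finset.disjoint_left]
    intro a ha hb
    simp only [Finset.mem_filter, Finset.mem_union, Finset.mem_image] at ha hb
    obtain ⟨⟨y, _, h⟩, _⟩ := hb
    rcases ha with ⟨⟨x, _, rfl⟩, -⟩ | ⟨⟨x, _, rfl⟩, -⟩ <;> exact absurd h (by simp)


section Shapes

variable {m n : ℕ}

/-- Shape Sa : sum over cells p of Smn with p ∈ X, (p.1, p.2+1) ∉ X -/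
lemma shape_hEnds (X : Finset (ℕ × ℕ)) (hX : X ⊆ Smn m n) (g : ℕ × ℕ → ℤ) :
    ∑ p ∈ (Smn m n).filter (fun p => p ∈ X ∧ (p.1, p.2 + 1) ∉ X), g p
      = ∑ s ∈ hEnds X, g s := by
  congr 1
  rw [hEnds]
  ext p
  simp only [Finset.mem_filter]
  exact ⟨fun h => ⟨h.2.1, h.2.2⟩, fun h => ⟨hX h.1, h.1, h.2⟩⟩

lemma shape_vEnds (X : Finset (ℕ × ℕ)) (hX : X ⊆ Smn m n) (g : ℕ × ℕ → ℤ) :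
    ∑ p ∈ (Smn m n).filter (fun p => p ∈ X ∧ (p.1 + 1, p.2) ∉ X), g p
      = ∑ s ∈ vEnds X, g s := by
  congr 1
  rw [vEnds]
  ext p
  simp only [Finset.mem_filter]
  exact ⟨fun h => ⟨h.2.1, h.2.2⟩, fun h => ⟨hX h.1, h.1, h.2⟩⟩

/-- Shape Sb : shifted sum, corresponding to hStarts -/
lemma shape_hStarts (X : Finset (ℕ × ℕ)) (hX : X ⊆ Smn m n) (g : ℕ × ℕ → ℤ) :
    ∑ p ∈ (Smn m n).filter (fun p => (p.1, p.2 + 1) ∈ X ∧ p ∉ X), g p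
      = ∑ s ∈ hStarts X, (if s.2 = 1 then 0 else g (s.1, s.2 - 1)) := by
  rw [← Finset.sum_filter_add_sum_filter_not (hStarts X) (fun s => s.2 = 1)]
  have h1 : ∀ s ∈ (hStarts X).filter (fun s => s.2 = 1),
      (if s.2 = 1 then 0 else g (s.1, s.2 - 1)) = 0 := by
    intro s hs
    rw [Finset.mem_filter] at hs
    rw [if_pos hs.2]
  rw [Finset.sum_congr rfl h1, Finset.sum_const_zero, zero_add]
  refine Finset.sum_nbij' (fun p => (p.1, p.2 + 1)) (fun s => (s.1, s.2 - 1)) ?_ ?_ ?_ ?_ ?_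
  · rintro ⟨p1, p2⟩ hp
    simp only [Finset.mem_filter] at hp
    obtain ⟨hpS, hin, hout⟩ := hp
    rw [mem_Smn] at hpS
    simp only [Finset.mem_filter, hStarts, Finset.mem_filter, Nat.add_sub_cancel]
    exact ⟨⟨hin, hout⟩, by simp; omega⟩
  · intro s hs
    simp only [Finset.mem_filter, hStarts] at hs
    obtain ⟨⟨hsX, hsout⟩, hs1⟩ := hs
    have hsS := hX hsX
    obtain ⟨s1, s2⟩ := s
    simp only at hs1 ⊢
    rw [mem_Smn] at hsS
    simp only [Finset.mem_filter, mem_Smn]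
    have h2 : s2 - 1 + 1 = s2 := by omega
    refine ⟨by omega, ?_, ?_⟩
    · rw [h2]; exact hsX
    · rw [show ((s1 : ℕ), s2 - 1) = (s1, s2 - 1) from rfl] at hsout ⊢
      exact hsout
  · rintro ⟨p1, p2⟩ hp
    simp only [Nat.add_sub_cancel]
  · intro s hs
    simp only [Finset.mem_filter, hStarts] at hs
    obtain ⟨⟨hsX, _⟩, hs1⟩ := hs
    have hsS := hX hsX
    obtain ⟨s1, s2⟩ := s
    rw [mem_Smn] at hsS
    simp only at hs1 ⊢
    congr 1
    omega
  · rintro ⟨p1, p2⟩ hp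
    simp only [Finset.mem_filter, mem_Smn] at hp
    have : ¬ (p2 + 1 = 1) := by omega
    simp only [this, if_false, Nat.add_sub_cancel]

lemma shape_vStarts (X : Finset (ℕ × ℕ)) (hX : X ⊆ Smn m n) (g : ℕ × ℕ → ℤ) :
    ∑ p ∈ (Smn m n).filter (fun p => (p.1 + 1, p.2) ∈ X ∧ p ∉ X), g p
      = ∑ s ∈ vStarts X, (if s.1 = 1 then 0 else g (s.1 - 1, s.2)) := by
  rw [← Finset.sum_filter_add_sum_filter_not (vStarts X) (fun s => s.1 = 1)]
  have h1 : ∀ s ∈ (vStarts X).filter (fun s => s.1 = 1),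
      (if s.1 = 1 then 0 else g (s.1 - 1, s.2)) = 0 := by
    intro s hs
    rw [Finset.mem_filter] at hs
    rw [if_pos hs.2]
  rw [Finset.sum_congr rfl h1, Finset.sum_const_zero, zero_add]
  refine Finset.sum_nbij' (fun p => (p.1 + 1, p.2)) (fun s => (s.1 - 1, s.2)) ?_ ?_ ?_ ?_ ?_
  · rintro ⟨p1, p2⟩ hp
    simp only [Finset.mem_filter] at hp
    obtain ⟨hpS, hin, hout⟩ := hp
    rw [mem_Smn] at hpS
    simp only [Finset.mem_filter, vStarts, Finset.mem_filter, Nat.add_sub_cancel]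
    exact ⟨⟨hin, hout⟩, by simp; omega⟩
  · intro s hs
    simp only [Finset.mem_filter, vStarts] at hs
    obtain ⟨⟨hsX, hsout⟩, hs1⟩ := hs
    have hsS := hX hsX
    obtain ⟨s1, s2⟩ := s
    simp only at hs1 ⊢
    rw [mem_Smn] at hsS
    simp only [Finset.mem_filter, mem_Smn]
    have h2 : s1 - 1 + 1 = s1 := by omega
    refine ⟨by omega, ?_, ?_⟩
    · rw [h2]; exact hsX
    · exact hsout
  · rintro ⟨p1, p2⟩ hp
    simp only [Nat.add_sub_cancel]
  · intro s hs
    simp only [Finset.mem_filter, vStarts] at hs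
    obtain ⟨⟨hsX, _⟩, hs1⟩ := hs
    have hsS := hX hsX
    obtain ⟨s1, s2⟩ := s
    rw [mem_Smn] at hsS
    simp only at hs1 ⊢
    congr 1
    omega
  · rintro ⟨p1, p2⟩ hp
    simp only [Finset.mem_filter, mem_Smn] at hp
    have : ¬ (p1 + 1 = 1) := by omega
    simp only [this, if_false, Nat.add_sub_cancel]

end Shapes

end PBMproof

namespace PBMproof

section Mdom

variable (m n : ℕ) (Φ1 Γ1 Φ2 Γ2 : ℕ × ℕ → ℤ) (SP : Finset (ℕ × ℕ)) (mP : ℕ × ℕ → ℤ)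

/-- weight cap for arcs (can be -M for bad cell arcs) -/
def Wcap (M : ℤ) : Arc → ℤ
  | .ar i j => |Φ1 (i, j)| + |Γ1 (i, j)|
  | .ac i j => |Φ2 (i, j)| + |Γ2 (i, j)|
  | .ce i j => if (i, j) ∈ SP then |mP (i, j)| else -M

/-- weight bound for arcs -/
def Wbig : Arc → ℤ
  | .ar i j => |Φ1 (i, j)| + |Γ1 (i, j)|
  | .ac i j => |Φ2 (i, j)| + |Γ2 (i, j)|
  | .ce i j => |mP (i, j)|

lemma sum_Wbig_le :
    ∑ e ∈ arcSet m n, Wbig Φ1 Γ1 Φ2 Γ2 mP e ≤ Mbig m n Φ1 Γ1 Φ2 Γ2 mP - 1 := by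
  classical
  have := sum_arcSet_split m n (Wbig Φ1 Γ1 Φ2 Γ2 mP) (fun _ => True)
  simp only [Finset.filter_true] at this
  rw [this]
  rw [Mbig]
  have h1 : ∀ p ∈ Smn m n, Wbig Φ1 Γ1 Φ2 Γ2 mP (Arc.ar p.1 p.2) = |Φ1 p| + |Γ1 p| := by
    intro p _; rw [Wbig, Prod.mk.eta]
  have h2 : ∀ p ∈ Smn m n, Wbig Φ1 Γ1 Φ2 Γ2 mP (Arc.ac p.1 p.2) = |Φ2 p| + |Γ2 p| := by
    intro p _; rw [Wbig, Prod.mk.eta]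
  have h3 : ∀ p ∈ Smn m n, Wbig Φ1 Γ1 Φ2 Γ2 mP (Arc.ce p.1 p.2) = |mP p| := by
    intro p _; rw [Wbig, Prod.mk.eta]
  rw [Finset.sum_congr rfl h1, Finset.sum_congr rfl h2, Finset.sum_congr rfl h3]
  rw [← Finset.sum_add_distrib, ← Finset.sum_add_distrib]
  have : ∑ p ∈ Smn m n, (|Φ1 p| + |Γ1 p| + (|Φ2 p| + |Γ2 p|) + |mP p|)
      = ∑ p ∈ Smn m n, (|Φ1 p| + |Γ1 p| + |Φ2 p| + |Γ2 p| + |mP p|) := by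
    apply Finset.sum_congr rfl; intro p _; ring
  omega

lemma lo_le_Wbig (e : Arc) :
    lo m n Φ1 Γ1 Φ2 Γ2 SP mP e
      ≤ Wcap Φ1 Γ1 Φ2 Γ2 SP mP (Mbig m n Φ1 Γ1 Φ2 Γ2 mP) e := by
  classical
  cases e with
  | ar i j => simp only [lo, Wcap]; have := abs_nonneg (Γ1 (i,j)); have := le_abs_self (Φ1 (i,j)); omega
  | ac i j => simp only [lo, Wcap]; have := abs_nonneg (Γ2 (i,j)); have := le_abs_self (Φ2 (i,j)); omega
  | ce i j =>
    simp only [lo, Wcap]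
    by_cases h : (i, j) ∈ SP
    · rw [if_pos h, if_pos h]; exact le_abs_self _
    · rw [if_neg h, if_neg h]

lemma neg_hi_le_Wbig (e : Arc) :
    -(hi m n Φ1 Γ1 Φ2 Γ2 SP mP e)
      ≤ Wcap Φ1 Γ1 Φ2 Γ2 SP mP (Mbig m n Φ1 Γ1 Φ2 Γ2 mP) e := by
  classical
  cases e with
  | ar i j => simp only [hi, Wcap]; have := abs_nonneg (Φ1 (i,j)); have := neg_le_abs (Γ1 (i,j)); omega
  | ac i j => simp only [hi, Wcap]; have := abs_nonneg (Φ2 (i,j)); have := neg_le_abs (Γ2 (i,j)); omega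
  | ce i j =>
    simp only [hi, Wcap]
    by_cases h : (i, j) ∈ SP
    · rw [if_pos h, if_pos h]; exact neg_le_abs _
    · rw [if_neg h, if_neg h]

lemma Mdom (K : Nd → Bool) (p0 : ℕ × ℕ) (hp0 : p0 ∈ Smn m n) (hp0SP : p0 ∉ SP)
    (hcross : K (Nd.w p0.1 (p0.2 - 1)) ≠ K (Nd.u (p0.1 - 1) p0.2)) :
    cutVal (arcSet m n) (tl m) (hd n) (lo m n Φ1 Γ1 Φ2 Γ2 SP mP)
      (hi m n Φ1 Γ1 Φ2 Γ2 SP mP) K ≤ 0 := by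
  classical
  set M := Mbig m n Φ1 Γ1 Φ2 Γ2 mP with hM
  have hMpos := Mbig_pos m n Φ1 Γ1 Φ2 Γ2 mP
  set W' : Arc → ℤ := Wcap Φ1 Γ1 Φ2 Γ2 SP mP M with hW'
  set U := cutIn (arcSet m n) (tl m) (hd n) K ∪ cutOut (arcSet m n) (tl m) (hd n) K with hU
  have hdisj : Disjoint (cutIn (arcSet m n) (tl m) (hd n) K) (cutOut (arcSet m n) (tl m) (hd n) K) := by
    rw [Finset.disjoint_left]
    intro e he1 he2
    rw [cutIn, Finset.mem_filter] at he1
    rw [cutOut, Finset.mem_filter] at he2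
    rw [he1.2.1] at he2
    rw [he1.2.2] at he2
    exact absurd he2.2.1 (by simp)
  have step1 : cutVal (arcSet m n) (tl m) (hd n) (lo m n Φ1 Γ1 Φ2 Γ2 SP mP)
      (hi m n Φ1 Γ1 Φ2 Γ2 SP mP) K ≤ ∑ e ∈ U, W' e := by
    rw [cutVal, hU, Finset.sum_union hdisj, sub_eq_add_neg, ← Finset.sum_neg_distrib]
    apply add_le_add
    · exact Finset.sum_le_sum (fun e _ => lo_le_Wbig m n Φ1 Γ1 Φ2 Γ2 SP mP e)
    · exact Finset.sum_le_sum (fun e _ => neg_hi_le_Wbig m n Φ1 Γ1 Φ2 Γ2 SP mP e)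
  -- the bad arc
  set e0 : Arc := Arc.ce p0.1 p0.2 with he0
  have he0U : e0 ∈ U := by
    have hmem : e0 ∈ arcSet m n := by rw [he0, ce_mem_arcSet, Prod.mk.eta]; exact hp0
    rw [hU, Finset.mem_union, cutIn, cutOut, Finset.mem_filter, Finset.mem_filter]
    have htl : tl m e0 = Nd.u (p0.1 - 1) p0.2 := rfl
    have hhd : hd n e0 = Nd.w p0.1 (p0.2 - 1) := rfl
    rw [htl, hhd]
    cases h1 : K (Nd.w p0.1 (p0.2 - 1)) <;> cases h2 : K (Nd.u (p0.1 - 1) p0.2) <;>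
      simp_all
  have he0W : W' e0 = -M := by
    rw [hW', he0]
    simp only [Wcap, Prod.mk.eta, if_neg hp0SP]
  have t1 : ∑ e ∈ U.erase e0, W' e ≤ ∑ e ∈ U.erase e0, Wbig Φ1 Γ1 Φ2 Γ2 mP e := by
    apply Finset.sum_le_sum
    intro e _
    rw [hW']
    cases e with
    | ar i j => simp only [Wcap, Wbig]; exact le_refl _
    | ac i j => simp only [Wcap, Wbig]; exact le_refl _
    | ce i j =>
      simp only [Wcap, Wbig]
      split
      · exact le_refl _
      · have := abs_nonneg (mP (i, j)); omega
  have t2 : ∑ e ∈ U.erase e0, Wbig Φ1 Γ1 Φ2 Γ2 mP e ≤ ∑ e ∈ arcSet m n, Wbig Φ1 Γ1 Φ2 Γ2 mP e := by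
    apply Finset.sum_le_sum_of_subset_of_nonneg
    · intro e he
      have := Finset.mem_of_mem_erase he
      rw [hU, Finset.mem_union, cutIn, cutOut] at this
      rcases this with h | h <;> exact Finset.mem_of_mem_filter _ h
    · intro e _ _
      cases e with
      | ar i j => simp only [Wbig]; positivity
      | ac i j => simp only [Wbig]; positivity
      | ce i j => simp only [Wbig]; positivity
  have t3 := sum_Wbig_le m n Φ1 Γ1 Φ2 Γ2 mP
  have step2 : ∑ e ∈ U, W' e ≤ -M + (M - 1) := by
    rw [← Finset.add_sum_erase _ _ he0U, he0W]
    omega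
  have := le_trans step1 step2
  omega

end Mdom

end PBMproof

namespace PBMproof

section CondToCut

variable (m n : ℕ) (Φ1 Γ1 Φ2 Γ2 : ℕ × ℕ → ℤ) (SP : Finset (ℕ × ℕ)) (mP : ℕ × ℕ → ℤ)

theorem cond_to_cut (hSP : SP ⊆ Smn m n)
    (hcond : ∀ X₁ ⊆ Smn m n, ∀ X₂ ⊆ Smn m n, (X₁ \ X₂) ∪ (X₂ \ X₁) ⊆ SP →
        (pstar1 Φ1 Γ1 X₁ + fsum mP (X₂ \ X₁) ≤ bstar2 Φ2 Γ2 X₂ + fsum mP (X₁ \ X₂)) ∧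
        (pstar2 Φ2 Γ2 X₂ + fsum mP (X₁ \ X₂) ≤ bstar1 Φ1 Γ1 X₁ + fsum mP (X₂ \ X₁))) :
    CutCond (arcSet m n) (tl m) (hd n) (lo m n Φ1 Γ1 Φ2 Γ2 SP mP)
      (hi m n Φ1 Γ1 Φ2 Γ2 SP mP) := by
  classical
  intro K
  set X1 := (Smn m n).filter (fun p => K (Nd.w p.1 (p.2 - 1)) ≠ K Nd.z) with hX1
  set X2 := (Smn m n).filter (fun p => K (Nd.u (p.1 - 1) p.2) ≠ K Nd.z) with hX2
  have hX1S : X1 ⊆ Smn m n := Finset.filter_subset _ _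
  have hX2S : X2 ⊆ Smn m n := Finset.filter_subset _ _
  by_cases hgood : (X1 \ X2) ∪ (X2 \ X1) ⊆ SP
  swap
  · -- bad case : some cell arc crossing outside SP
    rw [Finset.not_subset] at hgood
    obtain ⟨p0, hp0U, hp0SP⟩ := hgood
    rw [Finset.mem_union, Finset.mem_sdiff, Finset.mem_sdiff] at hp0U
    have hp0S : p0 ∈ Smn m n := by
      rcases hp0U with ⟨h, _⟩ | ⟨h, _⟩
      · exact hX1S h
      · exact hX2S h
    apply Mdom m n Φ1 Γ1 Φ2 Γ2 SP mP K p0 hp0S hp0SP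
    have m1 : p0 ∈ X1 ↔ ¬ (K (Nd.w p0.1 (p0.2 - 1)) = K Nd.z) := by
      rw [hX1, Finset.mem_filter]
      constructor
      · exact fun h => h.2
      · exact fun h => ⟨hp0S, h⟩
    have m2 : p0 ∈ X2 ↔ ¬ (K (Nd.u (p0.1 - 1) p0.2) = K Nd.z) := by
      rw [hX2, Finset.mem_filter]
      constructor
      · exact fun h => h.2
      · exact fun h => ⟨hp0S, h⟩
    rcases hp0U with ⟨h1, h2⟩ | ⟨h1, h2⟩
    · rw [m1] at h1
      rw [m2, not_not] at h2
      intro heq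
      exact h1 (heq.trans h2)
    · rw [m2] at h1
      rw [m1, not_not] at h2
      intro heq
      exact h1 (heq.symm.trans h2)
  -- good case
  rw [cutVal, cutIn, cutOut, sum_arcSet_split, sum_arcSet_split]
  -- the ce-sums
  have hce_in_set : ∀ (b : Bool), K Nd.z = b →
      (Smn m n).filter
        (fun p => K (hd n (Arc.ce p.1 p.2)) = true ∧ K (tl m (Arc.ce p.1 p.2)) = false)
      = (if b then X2 \ X1 else X1 \ X2) := by
    intro b hb
    ext p
    rw [Finset.mem_filter]
    have e1 : hd n (Arc.ce p.1 p.2) = Nd.w p.1 (p.2 - 1) := rfl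
    have e2 : tl m (Arc.ce p.1 p.2) = Nd.u (p.1 - 1) p.2 := rfl
    rw [e1, e2]
    cases b <;>
    · simp only [if_true, if_false, Finset.mem_sdiff, hX1, hX2, Finset.mem_filter, hb]
      cases hw : (K (Nd.w p.1 (p.2 - 1))) <;> cases hu : (K (Nd.u (p.1 - 1) p.2)) <;>
        simp_all <;> tauto
  have hce_out_set : ∀ (b : Bool), K Nd.z = b →
      (Smn m n).filter
        (fun p => K (tl m (Arc.ce p.1 p.2)) = true ∧ K (hd n (Arc.ce p.1 p.2)) = false)
      = (if b then X1 \ X2 else X2 \ X1) := by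
    intro b hb
    ext p
    rw [Finset.mem_filter]
    have e1 : hd n (Arc.ce p.1 p.2) = Nd.w p.1 (p.2 - 1) := rfl
    have e2 : tl m (Arc.ce p.1 p.2) = Nd.u (p.1 - 1) p.2 := rfl
    rw [e1, e2]
    cases b <;>
    · simp only [if_true, if_false, Finset.mem_sdiff, hX1, hX2, Finset.mem_filter, hb]
      cases hw : (K (Nd.w p.1 (p.2 - 1))) <;> cases hu : (K (Nd.u (p.1 - 1) p.2)) <;>
        simp_all <;> tauto
  have hce_sum_lo : ∀ Y : Finset (ℕ × ℕ), Y ⊆ SP →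
      ∑ p ∈ Y, lo m n Φ1 Γ1 Φ2 Γ2 SP mP (Arc.ce p.1 p.2) = fsum mP Y := by
    intro Y hY
    rw [fsum]
    apply Finset.sum_congr rfl
    intro p hp
    have : (p.1, p.2) ∈ SP := by rw [Prod.mk.eta]; exact hY hp
    simp only [lo, this, if_true, Prod.mk.eta]
  have hce_sum_hi : ∀ Y : Finset (ℕ × ℕ), Y ⊆ SP →
      ∑ p ∈ Y, hi m n Φ1 Γ1 Φ2 Γ2 SP mP (Arc.ce p.1 p.2) = fsum mP Y := by
    intro Y hY
    rw [fsum]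
    apply Finset.sum_congr rfl
    intro p hp
    have : (p.1, p.2) ∈ SP := by rw [Prod.mk.eta]; exact hY hp
    simp only [hi, this, if_true, Prod.mk.eta]
  have hsub1 : X1 \ X2 ⊆ SP := fun p hp => hgood (Finset.mem_union_left _ hp)
  have hsub2 : X2 \ X1 ⊆ SP := fun p hp => hgood (Finset.mem_union_right _ hp)
  -- ar and ac sums, by case on K Nd.z
  cases hb : K Nd.z with
  | false =>
    -- in-ar : shifted starts with Φ1 ; out-ar : ends with Γ1
    have har_in : (Smn m n).filter
        (fun p => K (hd n (Arc.ar p.1 p.2)) = true ∧ K (tl m (Arc.ar p.1 p.2)) = false)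
        = (Smn m n).filter (fun p => (p.1, p.2 + 1) ∈ X1 ∧ p ∉ X1) := by
      apply Finset.filter_congr
      rintro ⟨p1, p2⟩ hp
      rw [mem_Smn] at hp
      have e2 : tl m (Arc.ar p1 p2) = Nd.w p1 (p2 - 1) := rfl
      rw [e2]
      by_cases hpn : p2 = n
      · have e1 : hd n (Arc.ar p1 p2) = Nd.z := by simp [hd, hpn]
        rw [e1, hb]
        simp only [hX1, Finset.mem_filter, mem_Smn]
        constructor
        · rintro ⟨h, -⟩; exact absurd h (by simp)
        · rintro ⟨⟨⟨_, _, _, h⟩, _⟩, _⟩; omega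
      · have e1 : hd n (Arc.ar p1 p2) = Nd.w p1 p2 := by simp [hd, hpn]
        rw [e1]
        simp only [hX1, Finset.mem_filter, mem_Smn, Nat.add_sub_cancel]
        cases hw1 : (K (Nd.w p1 p2)) <;> cases hw2 : (K (Nd.w p1 (p2 - 1))) <;>
          simp_all <;> omega
    have har_out : (Smn m n).filter
        (fun p => K (tl m (Arc.ar p.1 p.2)) = true ∧ K (hd n (Arc.ar p.1 p.2)) = false)
        = (Smn m n).filter (fun p => p ∈ X1 ∧ (p.1, p.2 + 1) ∉ X1) := by
      apply Finset.filter_congr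
      rintro ⟨p1, p2⟩ hp
      rw [mem_Smn] at hp
      have e2 : tl m (Arc.ar p1 p2) = Nd.w p1 (p2 - 1) := rfl
      rw [e2]
      by_cases hpn : p2 = n
      · have e1 : hd n (Arc.ar p1 p2) = Nd.z := by simp [hd, hpn]
        rw [e1, hb]
        simp only [hX1, Finset.mem_filter, mem_Smn, Nat.add_sub_cancel]
        cases hw2 : (K (Nd.w p1 (p2 - 1))) <;> simp_all <;> omega
      · have e1 : hd n (Arc.ar p1 p2) = Nd.w p1 p2 := by simp [hd, hpn]
        rw [e1]
        simp only [hX1, Finset.mem_filter, mem_Smn, Nat.add_sub_cancel]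
        cases hw1 : (K (Nd.w p1 p2)) <;> cases hw2 : (K (Nd.w p1 (p2 - 1))) <;>
          simp_all <;> omega
    have hac_in : (Smn m n).filter
        (fun p => K (hd n (Arc.ac p.1 p.2)) = true ∧ K (tl m (Arc.ac p.1 p.2)) = false)
        = (Smn m n).filter (fun p => p ∈ X2 ∧ (p.1 + 1, p.2) ∉ X2) := by
      apply Finset.filter_congr
      rintro ⟨p1, p2⟩ hp
      rw [mem_Smn] at hp
      have e1 : hd n (Arc.ac p1 p2) = Nd.u (p1 - 1) p2 := rfl
      rw [e1]
      by_cases hpm : p1 = m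
      · have e2 : tl m (Arc.ac p1 p2) = Nd.z := by simp [tl, hpm]
        rw [e2, hb]
        simp only [hX2, Finset.mem_filter, mem_Smn, Nat.add_sub_cancel]
        cases hu2 : (K (Nd.u (p1 - 1) p2)) <;> simp_all <;> omega
      · have e2 : tl m (Arc.ac p1 p2) = Nd.u p1 p2 := by simp [tl, hpm]
        rw [e2]
        simp only [hX2, Finset.mem_filter, mem_Smn, Nat.add_sub_cancel]
        cases hu1 : (K (Nd.u p1 p2)) <;> cases hu2 : (K (Nd.u (p1 - 1) p2)) <;>
          simp_all <;> omega
    have hac_out : (Smn m n).filter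
        (fun p => K (tl m (Arc.ac p.1 p.2)) = true ∧ K (hd n (Arc.ac p.1 p.2)) = false)
        = (Smn m n).filter (fun p => (p.1 + 1, p.2) ∈ X2 ∧ p ∉ X2) := by
      apply Finset.filter_congr
      rintro ⟨p1, p2⟩ hp
      rw [mem_Smn] at hp
      have e1 : hd n (Arc.ac p1 p2) = Nd.u (p1 - 1) p2 := rfl
      rw [e1]
      by_cases hpm : p1 = m
      · have e2 : tl m (Arc.ac p1 p2) = Nd.z := by simp [tl, hpm]
        rw [e2, hb]
        simp only [hX2, Finset.mem_filter, mem_Smn, Nat.add_sub_cancel]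
        constructor
        · rintro ⟨h, -⟩; exact absurd h (by simp)
        · rintro ⟨⟨⟨_, h, _, _⟩, _⟩, _⟩; omega
      · have e2 : tl m (Arc.ac p1 p2) = Nd.u p1 p2 := by simp [tl, hpm]
        rw [e2]
        simp only [hX2, Finset.mem_filter, mem_Smn, Nat.add_sub_cancel]
        cases hu1 : (K (Nd.u p1 p2)) <;> cases hu2 : (K (Nd.u (p1 - 1) p2)) <;>
          simp_all <;> omega
    rw [har_in, har_out, hac_in, hac_out, hce_in_set false hb, hce_out_set false hb]
    simp only [if_false, Bool.false_eq_true]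
    have s1 : ∑ p ∈ (Smn m n).filter (fun p => (p.1, p.2 + 1) ∈ X1 ∧ p ∉ X1),
        lo m n Φ1 Γ1 Φ2 Γ2 SP mP (Arc.ar p.1 p.2)
        = ∑ s ∈ hStarts X1, (if s.2 = 1 then 0 else Φ1 (s.1, s.2 - 1)) := by
      rw [← shape_hStarts X1 hX1S (fun p => Φ1 p)]
      apply Finset.sum_congr rfl
      intro p _
      simp only [lo, Prod.mk.eta]
    have s2 : ∑ p ∈ (Smn m n).filter (fun p => p ∈ X1 ∧ (p.1, p.2 + 1) ∉ X1),
        hi m n Φ1 Γ1 Φ2 Γ2 SP mP (Arc.ar p.1 p.2)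
        = ∑ s ∈ hEnds X1, Γ1 s := by
      rw [← shape_hEnds X1 hX1S (fun p => Γ1 p)]
      apply Finset.sum_congr rfl
      intro p _
      simp only [hi, Prod.mk.eta]
    have s3 : ∑ p ∈ (Smn m n).filter (fun p => p ∈ X2 ∧ (p.1 + 1, p.2) ∉ X2),
        lo m n Φ1 Γ1 Φ2 Γ2 SP mP (Arc.ac p.1 p.2)
        = ∑ s ∈ vEnds X2, Φ2 s := by
      rw [← shape_vEnds X2 hX2S (fun p => Φ2 p)]
      apply Finset.sum_congr rfl
      intro p _
      simp only [lo, Prod.mk.eta]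
    have s4 : ∑ p ∈ (Smn m n).filter (fun p => (p.1 + 1, p.2) ∈ X2 ∧ p ∉ X2),
        hi m n Φ1 Γ1 Φ2 Γ2 SP mP (Arc.ac p.1 p.2)
        = ∑ s ∈ vStarts X2, (if s.1 = 1 then 0 else Γ2 (s.1 - 1, s.2)) := by
      rw [← shape_vStarts X2 hX2S (fun p => Γ2 p)]
      apply Finset.sum_congr rfl
      intro p _
      simp only [hi, Prod.mk.eta]
    rw [s1, s2, s3, s4, hce_sum_lo _ hsub1, hce_sum_hi _ hsub2]
    have hc := (hcond X1 hX1S X2 hX2S hgood).2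
    rw [pstar2, bstar1] at hc
    omega
  | true =>
    have har_in : (Smn m n).filter
        (fun p => K (hd n (Arc.ar p.1 p.2)) = true ∧ K (tl m (Arc.ar p.1 p.2)) = false)
        = (Smn m n).filter (fun p => p ∈ X1 ∧ (p.1, p.2 + 1) ∉ X1) := by
      apply Finset.filter_congr
      rintro ⟨p1, p2⟩ hp
      rw [mem_Smn] at hp
      have e2 : tl m (Arc.ar p1 p2) = Nd.w p1 (p2 - 1) := rfl
      rw [e2]
      by_cases hpn : p2 = n
      · have e1 : hd n (Arc.ar p1 p2) = Nd.z := by simp [hd, hpn]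
        rw [e1, hb]
        simp only [hX1, Finset.mem_filter, mem_Smn, Nat.add_sub_cancel]
        cases hw2 : (K (Nd.w p1 (p2 - 1))) <;> simp_all <;> omega
      · have e1 : hd n (Arc.ar p1 p2) = Nd.w p1 p2 := by simp [hd, hpn]
        rw [e1]
        simp only [hX1, Finset.mem_filter, mem_Smn, Nat.add_sub_cancel]
        cases hw1 : (K (Nd.w p1 p2)) <;> cases hw2 : (K (Nd.w p1 (p2 - 1))) <;>
          simp_all <;> omega
    have har_out : (Smn m n).filter
        (fun p => K (tl m (Arc.ar p.1 p.2)) = true ∧ K (hd n (Arc.ar p.1 p.2)) = false)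
        = (Smn m n).filter (fun p => (p.1, p.2 + 1) ∈ X1 ∧ p ∉ X1) := by
      apply Finset.filter_congr
      rintro ⟨p1, p2⟩ hp
      rw [mem_Smn] at hp
      have e2 : tl m (Arc.ar p1 p2) = Nd.w p1 (p2 - 1) := rfl
      rw [e2]
      by_cases hpn : p2 = n
      · have e1 : hd n (Arc.ar p1 p2) = Nd.z := by simp [hd, hpn]
        rw [e1, hb]
        simp only [hX1, Finset.mem_filter, mem_Smn]
        constructor
        · rintro ⟨-, h⟩; exact absurd h (by simp)
        · rintro ⟨⟨⟨_, _, _, h⟩, _⟩, _⟩; omega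
      · have e1 : hd n (Arc.ar p1 p2) = Nd.w p1 p2 := by simp [hd, hpn]
        rw [e1]
        simp only [hX1, Finset.mem_filter, mem_Smn, Nat.add_sub_cancel]
        cases hw1 : (K (Nd.w p1 p2)) <;> cases hw2 : (K (Nd.w p1 (p2 - 1))) <;>
          simp_all <;> omega
    have hac_in : (Smn m n).filter
        (fun p => K (hd n (Arc.ac p.1 p.2)) = true ∧ K (tl m (Arc.ac p.1 p.2)) = false)
        = (Smn m n).filter (fun p => (p.1 + 1, p.2) ∈ X2 ∧ p ∉ X2) := by
      apply Finset.filter_congr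
      rintro ⟨p1, p2⟩ hp
      rw [mem_Smn] at hp
      have e1 : hd n (Arc.ac p1 p2) = Nd.u (p1 - 1) p2 := rfl
      rw [e1]
      by_cases hpm : p1 = m
      · have e2 : tl m (Arc.ac p1 p2) = Nd.z := by simp [tl, hpm]
        rw [e2, hb]
        simp only [hX2, Finset.mem_filter, mem_Smn]
        constructor
        · rintro ⟨-, h⟩; exact absurd h (by simp)
        · rintro ⟨⟨⟨_, h, _, _⟩, _⟩, _⟩; omega
      · have e2 : tl m (Arc.ac p1 p2) = Nd.u p1 p2 := by simp [tl, hpm]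
        rw [e2]
        simp only [hX2, Finset.mem_filter, mem_Smn, Nat.add_sub_cancel]
        cases hu1 : (K (Nd.u p1 p2)) <;> cases hu2 : (K (Nd.u (p1 - 1) p2)) <;>
          simp_all <;> omega
    have hac_out : (Smn m n).filter
        (fun p => K (tl m (Arc.ac p.1 p.2)) = true ∧ K (hd n (Arc.ac p.1 p.2)) = false)
        = (Smn m n).filter (fun p => p ∈ X2 ∧ (p.1 + 1, p.2) ∉ X2) := by
      apply Finset.filter_congr
      rintro ⟨p1, p2⟩ hp
      rw [mem_Smn] at hp
      have e1 : hd n (Arc.ac p1 p2) = Nd.u (p1 - 1) p2 := rfl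
      rw [e1]
      by_cases hpm : p1 = m
      · have e2 : tl m (Arc.ac p1 p2) = Nd.z := by simp [tl, hpm]
        rw [e2, hb]
        simp only [hX2, Finset.mem_filter, mem_Smn, Nat.add_sub_cancel]
        cases hu2 : (K (Nd.u (p1 - 1) p2)) <;> simp_all <;> omega
      · have e2 : tl m (Arc.ac p1 p2) = Nd.u p1 p2 := by simp [tl, hpm]
        rw [e2]
        simp only [hX2, Finset.mem_filter, mem_Smn, Nat.add_sub_cancel]
        cases hu1 : (K (Nd.u p1 p2)) <;> cases hu2 : (K (Nd.u (p1 - 1) p2)) <;>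
          simp_all <;> omega
    rw [har_in, har_out, hac_in, hac_out, hce_in_set true hb, hce_out_set true hb]
    simp only [if_true]
    have s1 : ∑ p ∈ (Smn m n).filter (fun p => p ∈ X1 ∧ (p.1, p.2 + 1) ∉ X1),
        lo m n Φ1 Γ1 Φ2 Γ2 SP mP (Arc.ar p.1 p.2)
        = ∑ s ∈ hEnds X1, Φ1 s := by
      rw [← shape_hEnds X1 hX1S (fun p => Φ1 p)]
      apply Finset.sum_congr rfl
      intro p _
      simp only [lo, Prod.mk.eta]
    have s2 : ∑ p ∈ (Smn m n).filter (fun p => (p.1, p.2 + 1) ∈ X1 ∧ p ∉ X1),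
        hi m n Φ1 Γ1 Φ2 Γ2 SP mP (Arc.ar p.1 p.2)
        = ∑ s ∈ hStarts X1, (if s.2 = 1 then 0 else Γ1 (s.1, s.2 - 1)) := by
      rw [← shape_hStarts X1 hX1S (fun p => Γ1 p)]
      apply Finset.sum_congr rfl
      intro p _
      simp only [hi, Prod.mk.eta]
    have s3 : ∑ p ∈ (Smn m n).filter (fun p => (p.1 + 1, p.2) ∈ X2 ∧ p ∉ X2),
        lo m n Φ1 Γ1 Φ2 Γ2 SP mP (Arc.ac p.1 p.2)
        = ∑ s ∈ vStarts X2, (if s.1 = 1 then 0 else Φ2 (s.1 - 1, s.2)) := by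
      rw [← shape_vStarts X2 hX2S (fun p => Φ2 p)]
      apply Finset.sum_congr rfl
      intro p _
      simp only [lo, Prod.mk.eta]
    have s4 : ∑ p ∈ (Smn m n).filter (fun p => p ∈ X2 ∧ (p.1 + 1, p.2) ∉ X2),
        hi m n Φ1 Γ1 Φ2 Γ2 SP mP (Arc.ac p.1 p.2)
        = ∑ s ∈ vEnds X2, Γ2 s := by
      rw [← shape_vEnds X2 hX2S (fun p => Γ2 p)]
      apply Finset.sum_congr rfl
      intro p _
      simp only [hi, Prod.mk.eta]
    rw [s1, s2, s3, s4, hce_sum_lo _ hsub2, hce_sum_hi _ hsub1]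
    have hc := (hcond X1 hX1S X2 hX2S hgood).1
    rw [pstar1, bstar2] at hc
    omega

end CondToCut

end PBMproof

namespace PBMproof

section Forward

variable {m n : ℕ} (A : ℕ × ℕ → ℤ)

/-- row telescoping identity -/
lemma telescope_row (X : Finset (ℕ × ℕ)) (hX : X ⊆ Smn m n) :
    fsum A X = ∑ s ∈ hEnds X, fsum A (hPrefix s.1 s.2)
      - ∑ s ∈ hStarts X, (if s.2 = 1 then 0 else fsum A (hPrefix s.1 (s.2 - 1))) := by
  have hA : ∀ s ∈ X, A s = fsum A (hPrefix s.1 s.2) - fsum A (hPrefix s.1 (s.2 - 1)) := by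
    rintro ⟨s1, s2⟩ hs
    have hsS := hX hs
    rw [mem_Smn] at hsS
    rw [fsum_hPrefix, fsum_hPrefix]
    have h2 : s2 = (s2 - 1) + 1 := by omega
    rw [h2, Finset.sum_Icc_succ_top (by omega)]
    simp only [Nat.add_sub_cancel]
    ring_nf
  rw [fsum, Finset.sum_congr rfl hA, Finset.sum_sub_distrib]
  -- split both sums into ends/notends and starts/notstarts
  have split1 : ∑ s ∈ X, fsum A (hPrefix s.1 s.2)
      = ∑ s ∈ hEnds X, fsum A (hPrefix s.1 s.2)
        + ∑ s ∈ X.filter (fun s => (s.1, s.2 + 1) ∈ X), fsum A (hPrefix s.1 s.2) := by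
    rw [hEnds, ← Finset.sum_filter_add_sum_filter_not X (fun s => (s.1, s.2 + 1) ∉ X)]
    congr 1
    apply Finset.sum_congr _ (fun _ _ => rfl)
    apply Finset.filter_congr
    intro s _
    simp [not_not]
  have split2 : ∑ s ∈ X, fsum A (hPrefix s.1 (s.2 - 1))
      = ∑ s ∈ hStarts X, fsum A (hPrefix s.1 (s.2 - 1))
        + ∑ s ∈ X.filter (fun s => (s.1, s.2 - 1) ∈ X), fsum A (hPrefix s.1 (s.2 - 1)) := by
    rw [hStarts, ← Finset.sum_filter_add_sum_filter_not X (fun s => (s.1, s.2 - 1) ∉ X)]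
    congr 1
    apply Finset.sum_congr _ (fun _ _ => rfl)
    apply Finset.filter_congr
    intro s _
    simp [not_not]
  have bij : ∑ s ∈ X.filter (fun s => (s.1, s.2 + 1) ∈ X), fsum A (hPrefix s.1 s.2)
      = ∑ s ∈ X.filter (fun s => (s.1, s.2 - 1) ∈ X), fsum A (hPrefix s.1 (s.2 - 1)) := by
    refine Finset.sum_nbij' (fun s => (s.1, s.2 + 1)) (fun s => (s.1, s.2 - 1)) ?_ ?_ ?_ ?_ ?_
    · rintro ⟨s1, s2⟩ hs
      rw [Finset.mem_filter] at hs
      rw [Finset.mem_filter]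
      simp only [Nat.add_sub_cancel]
      exact ⟨hs.2, hs.1⟩
    · rintro ⟨s1, s2⟩ hs
      rw [Finset.mem_filter] at hs
      rw [Finset.mem_filter]
      have hsS := hX hs.2
      rw [mem_Smn] at hsS
      have h2 : s2 - 1 + 1 = s2 := by omega
      simp only [h2]
      exact ⟨hs.2, hs.1⟩
    · rintro ⟨s1, s2⟩ hs
      simp only [Nat.add_sub_cancel]
    · rintro ⟨s1, s2⟩ hs
      rw [Finset.mem_filter] at hs
      have hsS := hX hs.1
      rw [mem_Smn] at hsS
      simp only
      congr 1
      omega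
    · rintro ⟨s1, s2⟩ hs
      simp only [Nat.add_sub_cancel]
  have zero_starts : ∑ s ∈ hStarts X, fsum A (hPrefix s.1 (s.2 - 1))
      = ∑ s ∈ hStarts X, (if s.2 = 1 then 0 else fsum A (hPrefix s.1 (s.2 - 1))) := by
    apply Finset.sum_congr rfl
    intro s hs
    by_cases h1 : s.2 = 1
    · rw [if_pos h1, h1]
      rw [fsum_hPrefix]
      simp
    · rw [if_neg h1]
  rw [split1, split2, bij, zero_starts]
  ring

/-- column telescoping identity -/
lemma telescope_col (X : Finset (ℕ × ℕ)) (hX : X ⊆ Smn m n) :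
    fsum A X = ∑ s ∈ vEnds X, fsum A (vPrefix s.1 s.2)
      - ∑ s ∈ vStarts X, (if s.1 = 1 then 0 else fsum A (vPrefix (s.1 - 1) s.2)) := by
  have hA : ∀ s ∈ X, A s = fsum A (vPrefix s.1 s.2) - fsum A (vPrefix (s.1 - 1) s.2) := by
    rintro ⟨s1, s2⟩ hs
    have hsS := hX hs
    rw [mem_Smn] at hsS
    rw [fsum_vPrefix, fsum_vPrefix]
    have h2 : s1 = (s1 - 1) + 1 := by omega
    rw [h2, Finset.sum_Icc_succ_top (by omega)]
    simp only [Nat.add_sub_cancel]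
    ring_nf
  rw [fsum, Finset.sum_congr rfl hA, Finset.sum_sub_distrib]
  have split1 : ∑ s ∈ X, fsum A (vPrefix s.1 s.2)
      = ∑ s ∈ vEnds X, fsum A (vPrefix s.1 s.2)
        + ∑ s ∈ X.filter (fun s => (s.1 + 1, s.2) ∈ X), fsum A (vPrefix s.1 s.2) := by
    rw [vEnds, ← Finset.sum_filter_add_sum_filter_not X (fun s => (s.1 + 1, s.2) ∉ X)]
    congr 1
    apply Finset.sum_congr _ (fun _ _ => rfl)
    apply Finset.filter_congr
    intro s _
    simp [not_not]
  have split2 : ∑ s ∈ X, fsum A (vPrefix (s.1 - 1) s.2)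
      = ∑ s ∈ vStarts X, fsum A (vPrefix (s.1 - 1) s.2)
        + ∑ s ∈ X.filter (fun s => (s.1 - 1, s.2) ∈ X), fsum A (vPrefix (s.1 - 1) s.2) := by
    rw [vStarts, ← Finset.sum_filter_add_sum_filter_not X (fun s => (s.1 - 1, s.2) ∉ X)]
    congr 1
    apply Finset.sum_congr _ (fun _ _ => rfl)
    apply Finset.filter_congr
    intro s _
    simp [not_not]
  have bij : ∑ s ∈ X.filter (fun s => (s.1 + 1, s.2) ∈ X), fsum A (vPrefix s.1 s.2)
      = ∑ s ∈ X.filter (fun s => (s.1 - 1, s.2) ∈ X), fsum A (vPrefix (s.1 - 1) s.2) := by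
    refine Finset.sum_nbij' (fun s => (s.1 + 1, s.2)) (fun s => (s.1 - 1, s.2)) ?_ ?_ ?_ ?_ ?_
    · rintro ⟨s1, s2⟩ hs
      rw [Finset.mem_filter] at hs
      rw [Finset.mem_filter]
      simp only [Nat.add_sub_cancel]
      exact ⟨hs.2, hs.1⟩
    · rintro ⟨s1, s2⟩ hs
      rw [Finset.mem_filter] at hs
      rw [Finset.mem_filter]
      have hsS := hX hs.2
      rw [mem_Smn] at hsS
      have h2 : s1 - 1 + 1 = s1 := by omega
      simp only [h2]
      exact ⟨hs.2, hs.1⟩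
    · rintro ⟨s1, s2⟩ hs
      simp only [Nat.add_sub_cancel]
    · rintro ⟨s1, s2⟩ hs
      rw [Finset.mem_filter] at hs
      have hsS := hX hs.1
      rw [mem_Smn] at hsS
      simp only
      congr 1
      omega
    · rintro ⟨s1, s2⟩ hs
      simp only [Nat.add_sub_cancel]
  have zero_starts : ∑ s ∈ vStarts X, fsum A (vPrefix (s.1 - 1) s.2)
      = ∑ s ∈ vStarts X, (if s.1 = 1 then 0 else fsum A (vPrefix (s.1 - 1) s.2)) := by
    apply Finset.sum_congr rfl
    intro s hs
    by_cases h1 : s.1 = 1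
    · rw [if_pos h1, h1]
      rw [fsum_vPrefix]
      simp
    · rw [if_neg h1]
  rw [split1, split2, bij, zero_starts]
  ring

variable {Φ1 Γ1 Φ2 Γ2 : ℕ × ℕ → ℤ}

lemma pbm_bounds_row (hA : IsPBM m n Φ1 Γ1 Φ2 Γ2 A) (X : Finset (ℕ × ℕ)) (hX : X ⊆ Smn m n) :
    pstar1 Φ1 Γ1 X ≤ fsum A X ∧ fsum A X ≤ bstar1 Φ1 Γ1 X := by
  have hR : ∀ s ∈ Smn m n,
      Φ1 s ≤ fsum A (hPrefix s.1 s.2) ∧ fsum A (hPrefix s.1 s.2) ≤ Γ1 s := by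
    rintro ⟨s1, s2⟩ hs
    rw [mem_Smn] at hs
    have := hA s1 (Finset.mem_Icc.mpr ⟨hs.1, hs.2.1⟩) s2 (Finset.mem_Icc.mpr ⟨hs.2.2.1, hs.2.2.2⟩)
    exact this.1
  rw [telescope_row A X hX, pstar1, bstar1]
  have hEsub : hEnds X ⊆ Smn m n := fun s hs => hX (Finset.mem_of_mem_filter s hs)
  have hSsub : hStarts X ⊆ Smn m n := fun s hs => hX (Finset.mem_of_mem_filter s hs)
  constructor
  · have h1 : ∑ s ∈ hEnds X, Φ1 s ≤ ∑ s ∈ hEnds X, fsum A (hPrefix s.1 s.2) :=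
      Finset.sum_le_sum (fun s hs => (hR s (hEsub hs)).1)
    have h2 : ∑ s ∈ hStarts X, (if s.2 = 1 then 0 else fsum A (hPrefix s.1 (s.2 - 1)))
        ≤ ∑ s ∈ hStarts X, (if s.2 = 1 then 0 else Γ1 (s.1, s.2 - 1)) := by
      apply Finset.sum_le_sum
      intro s hs
      by_cases h1' : s.2 = 1
      · rw [if_pos h1', if_pos h1']
      · rw [if_neg h1', if_neg h1']
        have hsS := hSsub hs
        have hs' : (s.1, s.2 - 1) ∈ Smn m n := by
          obtain ⟨u, v⟩ := s
          rw [mem_Smn] at hsS ⊢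
          simp only at h1' ⊢
          omega
        exact (hR (s.1, s.2 - 1) hs').2
    omega
  · have h1 : ∑ s ∈ hEnds X, fsum A (hPrefix s.1 s.2) ≤ ∑ s ∈ hEnds X, Γ1 s :=
      Finset.sum_le_sum (fun s hs => (hR s (hEsub hs)).2)
    have h2 : ∑ s ∈ hStarts X, (if s.2 = 1 then 0 else Φ1 (s.1, s.2 - 1))
        ≤ ∑ s ∈ hStarts X, (if s.2 = 1 then 0 else fsum A (hPrefix s.1 (s.2 - 1))) := by
      apply Finset.sum_le_sum
      intro s hs
      by_cases h1' : s.2 = 1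
      · rw [if_pos h1', if_pos h1']
      · rw [if_neg h1', if_neg h1']
        have hsS := hSsub hs
        have hs' : (s.1, s.2 - 1) ∈ Smn m n := by
          obtain ⟨u, v⟩ := s
          rw [mem_Smn] at hsS ⊢
          simp only at h1' ⊢
          omega
        exact (hR (s.1, s.2 - 1) hs').1
    omega

lemma pbm_bounds_col (hA : IsPBM m n Φ1 Γ1 Φ2 Γ2 A) (X : Finset (ℕ × ℕ)) (hX : X ⊆ Smn m n) :
    pstar2 Φ2 Γ2 X ≤ fsum A X ∧ fsum A X ≤ bstar2 Φ2 Γ2 X := by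
  have hR : ∀ s ∈ Smn m n,
      Φ2 s ≤ fsum A (vPrefix s.1 s.2) ∧ fsum A (vPrefix s.1 s.2) ≤ Γ2 s := by
    rintro ⟨s1, s2⟩ hs
    rw [mem_Smn] at hs
    have := hA s1 (Finset.mem_Icc.mpr ⟨hs.1, hs.2.1⟩) s2 (Finset.mem_Icc.mpr ⟨hs.2.2.1, hs.2.2.2⟩)
    exact this.2
  rw [telescope_col A X hX, pstar2, bstar2]
  have hEsub : vEnds X ⊆ Smn m n := fun s hs => hX (Finset.mem_of_mem_filter s hs)
  have hSsub : vStarts X ⊆ Smn m n := fun s hs => hX (Finset.mem_of_mem_filter s hs)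
  constructor
  · have h1 : ∑ s ∈ vEnds X, Φ2 s ≤ ∑ s ∈ vEnds X, fsum A (vPrefix s.1 s.2) :=
      Finset.sum_le_sum (fun s hs => (hR s (hEsub hs)).1)
    have h2 : ∑ s ∈ vStarts X, (if s.1 = 1 then 0 else fsum A (vPrefix (s.1 - 1) s.2))
        ≤ ∑ s ∈ vStarts X, (if s.1 = 1 then 0 else Γ2 (s.1 - 1, s.2)) := by
      apply Finset.sum_le_sum
      intro s hs
      by_cases h1' : s.1 = 1
      · rw [if_pos h1', if_pos h1']
      · rw [if_neg h1', if_neg h1']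
        have hsS := hSsub hs
        have hs' : (s.1 - 1, s.2) ∈ Smn m n := by
          obtain ⟨u, v⟩ := s
          rw [mem_Smn] at hsS ⊢
          simp only at h1' ⊢
          omega
        exact (hR (s.1 - 1, s.2) hs').2
    omega
  · have h1 : ∑ s ∈ vEnds X, fsum A (vPrefix s.1 s.2) ≤ ∑ s ∈ vEnds X, Γ2 s :=
      Finset.sum_le_sum (fun s hs => (hR s (hEsub hs)).2)
    have h2 : ∑ s ∈ vStarts X, (if s.1 = 1 then 0 else Φ2 (s.1 - 1, s.2))
        ≤ ∑ s ∈ vStarts X, (if s.1 = 1 then 0 else fsum A (vPrefix (s.1 - 1) s.2)) := by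
      apply Finset.sum_le_sum
      intro s hs
      by_cases h1' : s.1 = 1
      · rw [if_pos h1', if_pos h1']
      · rw [if_neg h1', if_neg h1']
        have hsS := hSsub hs
        have hs' : (s.1 - 1, s.2) ∈ Smn m n := by
          obtain ⟨u, v⟩ := s
          rw [mem_Smn] at hsS ⊢
          simp only at h1' ⊢
          omega
        exact (hR (s.1 - 1, s.2) hs').1
    omega

theorem forward_dir (hA : IsPBM m n Φ1 Γ1 Φ2 Γ2 A)
    (SP : Finset (ℕ × ℕ)) (mP : ℕ × ℕ → ℤ) (hAmP : ∀ s ∈ SP, A s = mP s)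
    (X₁ : Finset (ℕ × ℕ)) (hX1 : X₁ ⊆ Smn m n)
    (X₂ : Finset (ℕ × ℕ)) (hX2 : X₂ ⊆ Smn m n)
    (hdiff : (X₁ \ X₂) ∪ (X₂ \ X₁) ⊆ SP) :
    (pstar1 Φ1 Γ1 X₁ + fsum mP (X₂ \ X₁) ≤ bstar2 Φ2 Γ2 X₂ + fsum mP (X₁ \ X₂)) ∧
    (pstar2 Φ2 Γ2 X₂ + fsum mP (X₁ \ X₂) ≤ bstar1 Φ1 Γ1 X₁ + fsum mP (X₂ \ X₁)) := by
  have hmp1 : fsum A (X₁ \ X₂) = fsum mP (X₁ \ X₂) := by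
    apply Finset.sum_congr rfl
    intro s hs
    exact hAmP s (hdiff (Finset.mem_union_left _ hs))
  have hmp2 : fsum A (X₂ \ X₁) = fsum mP (X₂ \ X₁) := by
    apply Finset.sum_congr rfl
    intro s hs
    exact hAmP s (hdiff (Finset.mem_union_right _ hs))
  have hsym : fsum A X₁ + fsum A (X₂ \ X₁) = fsum A X₂ + fsum A (X₁ \ X₂) := by
    rw [fsum, fsum, fsum, fsum, ← Finset.sum_union (Finset.disjoint_sdiff),
      ← Finset.sum_union (Finset.disjoint_sdiff), Finset.union_sdiff_self_eq_union,
      Finset.union_sdiff_self_eq_union, Finset.union_comm]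
  have hb1 := pbm_bounds_row A hA X₁ hX1
  have hb2 := pbm_bounds_col A hA X₂ hX2
  constructor
  · have := hb1.1
    have := hb2.2
    omega
  · have := hb2.1
    have := hb1.2
    omega

end Forward

end PBMproof

/-- existence of a prefix-bounded matrix extending a partial
prescription m_P on S_P (Corollary fixedPB). -/
theorem stmt_13 (m n : ℕ) (hm : 1 ≤ m) (hn : 1 ≤ n)
    (Φ1 Γ1 Φ2 Γ2 : ℕ × ℕ → ℤ)
    (hΦΓ1 : ∀ s ∈ Smn m n, Φ1 s ≤ Γ1 s) (hΦΓ2 : ∀ s ∈ Smn m n, Φ2 s ≤ Γ2 s)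
    (SP : Finset (ℕ × ℕ)) (hSP : SP ⊆ Smn m n) (mP : ℕ × ℕ → ℤ) :
    (∃ A : ℕ × ℕ → ℤ, IsPBM m n Φ1 Γ1 Φ2 Γ2 A ∧ ∀ s ∈ SP, A s = mP s) ↔
      (∀ X₁ ⊆ Smn m n, ∀ X₂ ⊆ Smn m n, (X₁ \ X₂) ∪ (X₂ \ X₁) ⊆ SP →
        (pstar1 Φ1 Γ1 X₁ + fsum mP (X₂ \ X₁) ≤
          bstar2 Φ2 Γ2 X₂ + fsum mP (X₁ \ X₂)) ∧
        (pstar2 Φ2 Γ2 X₂ + fsum mP (X₁ \ X₂) ≤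
          bstar1 Φ1 Γ1 X₁ + fsum mP (X₂ \ X₁))) := by
  constructor
  · rintro ⟨A, hA, hAmP⟩ X₁ hX1 X₂ hX2 hdiff
    exact PBMproof.forward_dir A hA SP mP hAmP X₁ hX1 X₂ hX2 hdiff
  · intro hcond
    have hcut := PBMproof.cond_to_cut m n Φ1 Γ1 Φ2 Γ2 SP mP hSP hcond
    obtain ⟨f, hf⟩ := PBMproof.hoffman (PBMproof.arcSet m n) (PBMproof.tl m) (PBMproof.hd n)
      _ _ (PBMproof.lo_le_hi m n Φ1 Γ1 Φ2 Γ2 SP mP hΦΓ1 hΦΓ2) hcut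
    exact PBMproof.circ_to_pbm m n Φ1 Γ1 Φ2 Γ2 SP mP f hSP hf
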